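/- Let E be a phase observable with phase matrix (c_{n,m}), i.e. E(X) = ∑_{n,m} c_{n,m} (1/(2π)) ∫_X e^{i(n−m)x} dx |n⟩⟨m| on a Hilbert space with orthonormal basis (|n⟩). If E(X)E(Y) = E(Y)E(X) for all Borel sets X, Y ⊆ [0,2π), then c_{n,m} = 0 for all n ≠ m, i.e. E is the trivial phase E_triv(X) = (ℓ(X)/(2π))·I. -/

import Mathlib

open MeasureTheory Complex

/-- `phaseInt X n m = (1/2π) ∫_X e^{i(n-m)x} dx`. -/
noncomputable def phaseInt (X : Set ℝ) (n m : ℕ) : ℂ :=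
  ((1 / (2 * Real.pi) : ℝ) : ℂ) *
    ∫ x in X, Complex.exp (Complex.I * ((n : ℂ) - (m : ℂ)) * (x : ℂ))

/-- closed form of `phaseInt (Ico 0 t)`. -/
noncomputable def aFun (j m : ℕ) (t : ℝ) : ℂ :=
  if j = m then ((t / (2 * Real.pi) : ℝ) : ℂ)
  else ((1 / (2 * Real.pi) : ℝ) : ℂ) *
    (Complex.exp (Complex.I * ((j : ℂ) - (m : ℂ)) * (t : ℂ)) - 1) /
      (Complex.I * ((j : ℂ) - (m : ℂ)))

lemma aFun_continuous (j m : ℕ) : Continuous (fun t : ℝ => aFun j m t) := by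
  unfold aFun
  split_ifs with h
  · fun_prop
  · fun_prop

lemma phaseInt_Ico (j m : ℕ) (t : ℝ) (ht : 0 ≤ t) :
    phaseInt (Set.Ico 0 t) j m = aFun j m t := by
  unfold phaseInt aFun
  rw [setIntegral_congr_set Ico_ae_eq_Ioc, ← intervalIntegral.integral_of_le ht]
  by_cases h : j = m
  · subst h
    simp only [if_pos rfl, sub_self, mul_zero, zero_mul, Complex.exp_zero,
      intervalIntegral.integral_const, smul_eq_mul, mul_one, sub_zero, Complex.real_smul]
    push_cast
    ring
  · have hd : (Complex.I * ((j : ℂ) - (m : ℂ))) ≠ 0 := by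
      apply mul_ne_zero Complex.I_ne_zero
      simp only [sub_ne_zero, Ne, Nat.cast_inj]
      exact h
    rw [if_neg h, integral_exp_mul_complex hd]
    simp only [Complex.ofReal_zero, mul_zero, Complex.exp_zero]
    ring

lemma int_exp_orth (q : ℤ) :
    ∫ t in (0:ℝ)..(2*Real.pi), Complex.exp (Complex.I * (q:ℂ) * (t:ℂ))
      = if q = 0 then ((2*Real.pi : ℝ) : ℂ) else 0 := by
  by_cases hq : q = 0
  · subst hq
    simp
  · have hc : Complex.I * (q:ℂ) ≠ 0 :=
      mul_ne_zero Complex.I_ne_zero (by exact_mod_cast hq)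
    rw [if_neg hq]
    have : ∀ t : ℝ, Complex.I * (q:ℂ) * (t:ℂ) = (Complex.I * (q:ℂ)) * (t:ℂ) := fun t => by ring
    rw [show (fun t : ℝ => Complex.exp (Complex.I * (q:ℂ) * (t:ℂ)))
        = fun t : ℝ => Complex.exp ((Complex.I * (q:ℂ)) * (t:ℂ)) from rfl]
    rw [integral_exp_mul_complex hc]
    have h1 : Complex.I * (q:ℂ) * ((2*Real.pi : ℝ) : ℂ) = (q:ℂ) * (2 * (Real.pi:ℂ) * Complex.I) := by
      push_cast; ring
    rw [h1, Complex.exp_int_mul_two_pi_mul_I]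
    simp

lemma int_id_mul_exp {c : ℂ} (hc : c ≠ 0) (a b : ℝ) :
    ∫ t in a..b, (t:ℂ) * Complex.exp (c * (t:ℂ))
      = ((b:ℂ)/c - 1/c^2) * Complex.exp (c * b) - ((a:ℂ)/c - 1/c^2) * Complex.exp (c * a) := by
  have hG : ∀ w : ℂ, HasDerivAt (fun w : ℂ => (w/c - 1/c^2) * Complex.exp (c * w))
      (w * Complex.exp (c * w)) w := by
    intro w
    have h1 : HasDerivAt (fun w : ℂ => w/c - 1/c^2) (1/c) w := by
      exact ((hasDerivAt_id w).div_const c).sub_const (1/c^2)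
    have h2 : HasDerivAt (fun w : ℂ => Complex.exp (c * w)) (Complex.exp (c * w) * c) w := by
      simpa using ((hasDerivAt_id w).const_mul c).cexp
    have := h1.fun_mul h2
    refine this.congr_deriv ?_
    field_simp
    ring
  have key : ∀ x : ℝ, HasDerivAt (fun t : ℝ => ((t:ℂ)/c - 1/c^2) * Complex.exp (c * (t:ℂ)))
      ((x:ℂ) * Complex.exp (c * (x:ℂ))) x := fun x => (hG x).comp_ofReal
  rw [intervalIntegral.integral_eq_sub_of_hasDerivAt (fun x _ => key x)]
  exact (Continuous.intervalIntegrable (by fun_prop) a b)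

lemma int_t_exp (p : ℕ) (hp : 0 < p) :
    ∫ t in (0:ℝ)..(2*Real.pi), (t:ℂ) * Complex.exp (Complex.I * (p:ℂ) * (t:ℂ))
      = ((2*Real.pi : ℝ) : ℂ) / (Complex.I * (p:ℂ)) := by
  have hc : Complex.I * (p:ℂ) ≠ 0 := by
    refine mul_ne_zero Complex.I_ne_zero ?_
    exact_mod_cast hp.ne'
  rw [int_id_mul_exp hc]
  have h1 : Complex.I * (p:ℂ) * ((2*Real.pi : ℝ) : ℂ) = ((p:ℤ):ℂ) * (2 * (Real.pi:ℂ) * Complex.I) := by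
    push_cast; ring
  rw [h1, Complex.exp_int_mul_two_pi_mul_I]
  simp only [Complex.ofReal_zero, mul_zero, Complex.exp_zero]
  ring

lemma intA (p : ℕ) (hp : 0 < p) (j m : ℕ) :
    (∫ t in Set.Ico (0:ℝ) (2*Real.pi), Complex.exp (Complex.I * (p:ℂ) * (t:ℂ)) * aFun j m t)
      = if (m:ℤ) = (j:ℤ) + p then Complex.I/(p:ℂ)
        else if m = j then -(Complex.I/(p:ℂ)) else 0 := by
  have h2pi : (0:ℝ) ≤ 2*Real.pi := by positivity
  have hpC : (p:ℂ) ≠ 0 := by exact_mod_cast hp.ne'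
  have h2piC : ((2*Real.pi : ℝ):ℂ) ≠ 0 := by simpa using Real.pi_ne_zero
  have hIp : (1:ℂ)/(Complex.I * (p:ℂ)) = -(Complex.I/(p:ℂ)) := by
    rw [one_div, mul_inv, Complex.inv_I]; ring
  have hIpneg : (1:ℂ)/(Complex.I * -(p:ℂ)) = Complex.I/(p:ℂ) := by
    rw [one_div, mul_neg, inv_neg, mul_inv, Complex.inv_I]; ring
  rw [setIntegral_congr_set Ico_ae_eq_Ioc, ← intervalIntegral.integral_of_le h2pi]
  by_cases hjm : j = m
  · subst hjm
    rw [if_neg (by omega), if_pos rfl]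
    have hfe : (fun t : ℝ => Complex.exp (Complex.I * (p:ℂ) * (t:ℂ)) * aFun j j t)
        = fun t : ℝ => (1/((2*Real.pi : ℝ):ℂ)) * ((t:ℂ) * Complex.exp (Complex.I * (p:ℂ) * (t:ℂ))) := by
      funext t
      simp only [aFun, if_pos rfl]
      push_cast
      ring
    rw [hfe, intervalIntegral.integral_const_mul, int_t_exp p hp]
    rw [show (1/((2*Real.pi : ℝ):ℂ)) * (((2*Real.pi : ℝ):ℂ)/(Complex.I*(p:ℂ)))
        = ((2*Real.pi : ℝ):ℂ)/((2*Real.pi : ℝ):ℂ) * ((1:ℂ)/(Complex.I*(p:ℂ))) from by ring,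
      div_self h2piC, one_mul, hIp]
  · have hmj : m ≠ j := fun h => hjm h.symm
    have hdC : ((j:ℂ) - (m:ℂ)) ≠ 0 := by
      simpa [sub_ne_zero, Ne, Nat.cast_inj] using hjm
    have hd : Complex.I * ((j:ℂ) - (m:ℂ)) ≠ 0 := mul_ne_zero Complex.I_ne_zero hdC
    have hfe : (fun t : ℝ => Complex.exp (Complex.I * (p:ℂ) * (t:ℂ)) * aFun j m t)
        = fun t : ℝ => (((1/(2*Real.pi) : ℝ):ℂ) / (Complex.I * ((j:ℂ) - (m:ℂ)))) *
            (Complex.exp (Complex.I * ((((p:ℤ) + (j:ℤ) - (m:ℤ) : ℤ)):ℂ) * (t:ℂ))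
              - Complex.exp (Complex.I * (((p:ℤ):ℤ):ℂ) * (t:ℂ))) := by
      funext t
      simp only [aFun, if_neg hjm]
      rw [show Complex.I * ((((p:ℤ) + (j:ℤ) - (m:ℤ) : ℤ)):ℂ) * (t:ℂ)
          = Complex.I * (p:ℂ) * (t:ℂ) + Complex.I * ((j:ℂ) - (m:ℂ)) * (t:ℂ) by push_cast; ring,
        Complex.exp_add,
        show Complex.I * (((p:ℤ):ℤ):ℂ) * (t:ℂ) = Complex.I * (p:ℂ) * (t:ℂ) by push_cast; ring]
      field_simp
    rw [hfe, intervalIntegral.integral_const_mul, intervalIntegral.integral_sub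
      (Continuous.intervalIntegrable (by fun_prop) _ _)
      (Continuous.intervalIntegrable (by fun_prop) _ _),
      int_exp_orth, int_exp_orth]
    rw [if_neg (show ¬((p:ℤ) = 0) by omega)]
    by_cases hcase : (m:ℤ) = (j:ℤ) + p
    · rw [if_pos hcase]
      rw [if_pos (show (p:ℤ) + (j:ℤ) - (m:ℤ) = 0 from by omega)]
      have hjmval : (j:ℂ) - (m:ℂ) = -(p:ℂ) := by
        have h' : (j:ℤ) - m = -(p:ℤ) := by omega
        have h'' := congrArg (fun z : ℤ => (z:ℂ)) h'
        push_cast at h''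
        exact h''
      rw [hjmval, sub_zero]
      rw [show ((1/(2*Real.pi) : ℝ):ℂ) / (Complex.I * -(p:ℂ)) * ((2*Real.pi : ℝ):ℂ)
          = (((2*Real.pi : ℝ):ℂ) * ((1/(2*Real.pi) : ℝ):ℂ)) * ((1:ℂ)/(Complex.I * -(p:ℂ)))
          from by ring]
      rw [show ((2*Real.pi : ℝ):ℂ) * ((1/(2*Real.pi) : ℝ):ℂ) = 1 from by
        push_cast
        field_simp]
      rw [one_mul, hIpneg]
    · rw [if_neg hcase, if_neg hmj]
      rw [if_neg (show ¬((p:ℤ) + (j:ℤ) - (m:ℤ) = 0) from by omega)]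
      simp

lemma norm_exp_I_real (r : ℝ) (t : ℝ) : ‖Complex.exp (Complex.I * (r:ℂ) * (t:ℂ))‖ = 1 := by
  rw [show Complex.I * (r:ℂ) * (t:ℂ) = ((r*t : ℝ):ℂ) * Complex.I by push_cast; ring,
    Complex.norm_exp_ofReal_mul_I]

lemma norm_aFun_le (j m : ℕ) (h : j ≠ m) (t : ℝ) :
    ‖aFun j m t‖ ≤ 1 / (Real.pi * |(j:ℝ) - m|) := by
  have hπ := Real.pi_pos
  have habs : (0:ℝ) < |(j:ℝ) - m| := by
    rw [abs_pos, sub_ne_zero]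
    exact_mod_cast h
  have hcast : ((j:ℂ) - (m:ℂ)) = (((j:ℝ) - m : ℝ) : ℂ) := by push_cast; ring
  have hden : ‖Complex.I * ((j:ℂ) - (m:ℂ))‖ = |(j:ℝ) - m| := by
    rw [norm_mul, Complex.norm_I, one_mul, hcast, Complex.norm_real, Real.norm_eq_abs]
  have hnum : ‖Complex.exp (Complex.I * ((j:ℂ) - (m:ℂ)) * (t:ℂ)) - 1‖ ≤ 2 := by
    calc ‖Complex.exp (Complex.I * ((j:ℂ) - (m:ℂ)) * (t:ℂ)) - 1‖
        ≤ ‖Complex.exp (Complex.I * ((j:ℂ) - (m:ℂ)) * (t:ℂ))‖ + ‖(1:ℂ)‖ := norm_sub_le _ _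
      _ = 2 := by rw [hcast, norm_exp_I_real, norm_one]; norm_num
  have h1 : ‖((1/(2*Real.pi):ℝ):ℂ)‖ = 1/(2*Real.pi) := by
    rw [Complex.norm_real, Real.norm_eq_abs, abs_of_pos (by positivity)]
  unfold aFun
  rw [if_neg h, norm_div, norm_mul, h1, hden]
  calc 1/(2*Real.pi) * ‖Complex.exp (Complex.I * ((j:ℂ) - (m:ℂ)) * (t:ℂ)) - 1‖ / |(j:ℝ) - m|
      ≤ 1/(2*Real.pi) * 2 / |(j:ℝ) - m| := by gcongr
    _ = 1 / (Real.pi * |(j:ℝ) - m|) := by field_simp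

lemma aFun_shift (p n : ℕ) (hp : 0 < p) (hpn : p ≤ n) (t : ℝ) :
    aFun n (n-p) t = aFun (n+p) n t := by
  have h1 : ((n:ℂ) - ((n-p : ℕ):ℂ)) = (p:ℂ) := by
    rw [Nat.cast_sub hpn]; ring
  have h2 : (((n+p:ℕ):ℂ) - (n:ℂ)) = (p:ℂ) := by push_cast; ring
  unfold aFun
  rw [if_neg (by omega), if_neg (by omega), h1, h2]

lemma aFun_p_val (p j : ℕ) (hp : 0 < p) :
    aFun (j+p) j (Real.pi/p) = ((1/(2*Real.pi):ℝ):ℂ) * (-2) / (Complex.I * (p:ℂ)) := by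
  have hpC : (p:ℂ) ≠ 0 := by exact_mod_cast hp.ne'
  have h2 : (((j+p:ℕ):ℂ) - (j:ℂ)) = (p:ℂ) := by push_cast; ring
  unfold aFun
  rw [if_neg (by omega), h2]
  have h3 : Complex.I * (p:ℂ) * ((Real.pi/p : ℝ):ℂ) = (Real.pi:ℂ) * Complex.I := by
    push_cast
    field_simp
  rw [h3, Complex.exp_pi_mul_I]
  norm_num

lemma aFun_p_ne (p j : ℕ) (hp : 0 < p) : aFun (j+p) j (Real.pi/p) ≠ 0 := by
  rw [aFun_p_val p j hp]
  have hpC : (p:ℂ) ≠ 0 := by exact_mod_cast hp.ne'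
  apply div_ne_zero
  · apply mul_ne_zero _ (by norm_num : (-2:ℂ) ≠ 0)
    simpa using Real.pi_ne_zero
  · exact mul_ne_zero Complex.I_ne_zero hpC

lemma bound_summable (n : ℕ) :
    Summable (fun k : ℕ => if k = n then (0:ℝ) else (4*Real.pi) / ((n:ℝ)-k)^2) := by
  have h : Summable (fun k : ℕ => 1 / ((k:ℝ))^2) :=
    Real.summable_one_div_nat_pow.mpr one_lt_two
  have h1 : Summable (fun k : ℕ => 1 / ((k:ℝ)+1)^2) :=
    ((summable_nat_add_iff 1).mpr h).congr (fun k => by push_cast; ring)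
  have h2 : Summable (fun k : ℕ => (4*Real.pi) * (1/((k:ℝ)+1)^2)) := h1.mul_left _
  refine (summable_nat_add_iff (n+1)).mp (h2.congr fun k => ?_)
  show (4*Real.pi) * (1/((k:ℝ)+1)^2)
      = if k + (n+1) = n then (0:ℝ) else (4*Real.pi) / ((n:ℝ) - ((k + (n+1) : ℕ):ℝ))^2
  rw [if_neg (by omega)]
  have hcast : (n:ℝ) - ((k + (n+1) : ℕ):ℝ) = -(((k:ℝ))+1) := by push_cast; ring
  rw [hcast, neg_sq, mul_one_div]

lemma norm_exp_I_nat (p : ℕ) (t : ℝ) : ‖Complex.exp (Complex.I * (p:ℂ) * (t:ℂ))‖ = 1 := by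
  rw [← Complex.ofReal_natCast p]
  exact norm_exp_I_real _ t

/-- A commutative phase observable is trivial: if a phase observable `E`, with phase matrix
`(c_{n,m})` given by inner products of unit vectors, satisfies `E(X)E(Y) = E(Y)E(X)` for all
Borel `X, Y ⊆ [0,2π)`, then `c_{n,m} = 0` for `n ≠ m`. -/
theorem stmt10 {H : Type*} [NormedAddCommGroup H] [InnerProductSpace ℂ H] [CompleteSpace H]
    (e : HilbertBasis ℕ ℂ H) (ξ : ℕ → H) (hξ : ∀ n, ‖ξ n‖ = 1)
    (c : ℕ → ℕ → ℂ) (hc : ∀ n m, c n m = (inner ℂ (ξ n) (ξ m) : ℂ))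
    (E : Set ℝ → (H →L[ℂ] H))
    (hE : ∀ X : Set ℝ, MeasurableSet X → X ⊆ Set.Ico 0 (2 * Real.pi) → ∀ n m : ℕ,
      (inner ℂ (e n) (E X (e m)) : ℂ) = c n m * phaseInt X n m)
    (hcomm : ∀ X Y : Set ℝ, MeasurableSet X → MeasurableSet Y →
      X ⊆ Set.Ico 0 (2 * Real.pi) → Y ⊆ Set.Ico 0 (2 * Real.pi) →
      (E X).comp (E Y) = (E Y).comp (E X)) :
    ∀ n m : ℕ, n ≠ m → c n m = 0 := by
  have hπ := Real.pi_pos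
  have hconj : ∀ a b, c b a = (starRingEnd ℂ) (c a b) := by
    intro a b
    rw [hc, hc, ← inner_conj_symm]
  have hcbound : ∀ a b, ‖c a b‖ ≤ 1 := by
    intro a b
    rw [hc]
    calc ‖(inner ℂ (ξ a) (ξ b) : ℂ)‖ ≤ ‖ξ a‖ * ‖ξ b‖ := norm_inner_le_norm _ _
      _ = 1 := by rw [hξ, hξ, one_mul]
  -- expansion of matrix elements of products
  have expand : ∀ X Y : Set ℝ, MeasurableSet X → MeasurableSet Y →
      X ⊆ Set.Ico 0 (2*Real.pi) → Y ⊆ Set.Ico 0 (2*Real.pi) → ∀ n : ℕ,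
      HasSum (fun k => (c n k * phaseInt X n k) * (c k n * phaseInt Y k n))
        ((inner ℂ (e n) ((E X) ((E Y) (e n)))) : ℂ) := by
    intro X Y hX hY hXs hYs n
    have h0 := e.hasSum_inner_mul_inner
      ((ContinuousLinearMap.adjoint (E X)) (e n)) ((E Y) (e n))
    have h1 : (inner ℂ ((ContinuousLinearMap.adjoint (E X)) (e n)) ((E Y) (e n)) : ℂ)
        = (inner ℂ (e n) ((E X) ((E Y) (e n))) : ℂ) :=
      ContinuousLinearMap.adjoint_inner_left (E X) ((E Y) (e n)) (e n)
    rw [h1] at h0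
    have h2 : (fun k => ((inner ℂ ((ContinuousLinearMap.adjoint (E X)) (e n)) (e k)) : ℂ)
          * (inner ℂ (e k) ((E Y) (e n)) : ℂ))
        = fun k => (c n k * phaseInt X n k) * (c k n * phaseInt Y k n) := by
      funext k
      rw [ContinuousLinearMap.adjoint_inner_left (E X) (e k) (e n),
        hE X hX hXs n k, hE Y hY hYs k n]
    rwa [h2] at h0
  -- key claim
  suffices key : ∀ p n0 : ℕ, 0 < p → c n0 (n0 + p) = 0 by
    intro a b hab
    rcases Nat.lt_or_ge a b with h | h
    · have := key (b - a) a (by omega)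
      rwa [show a + (b - a) = b by omega] at this
    · have hba : b < a := by omega
      have hz := key (a - b) b (by omega)
      rw [show b + (a - b) = a by omega] at hz
      rw [hconj b a, hz, map_zero]
  intro p n0 hp
  set s : ℝ := Real.pi / p with hs
  have hs0 : 0 ≤ s := le_of_lt (by positivity)
  have hsle : s ≤ 2 * Real.pi := by
    have h1 : Real.pi / p ≤ Real.pi := by
      apply div_le_self (le_of_lt hπ)
      exact_mod_cast hp
    rw [hs]; linarith
  have hYm : MeasurableSet (Set.Ico (0:ℝ) s) := measurableSet_Ico
  have hYs : Set.Ico (0:ℝ) s ⊆ Set.Ico 0 (2*Real.pi) := Set.Ico_subset_Ico le_rfl hsle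
  have hbY : ∀ j m : ℕ, phaseInt (Set.Ico (0:ℝ) s) j m = aFun j m s :=
    fun j m => phaseInt_Ico j m s hs0
  have hpC : (p:ℂ) ≠ 0 := by exact_mod_cast hp.ne'
  -- main analytic step
  have hw : ∀ n : ℕ, c n (n+p) * c (n+p) n
      = (if p ≤ n then c (n-p) (n-p+p) * c (n-p+p) (n-p) else 0) := by
    intro n
    set g : ℕ → ℝ → ℂ := fun k t => (c n k * c k n) *
      (Complex.exp (Complex.I * (p:ℂ) * (t:ℂ)) *
        (aFun n k t * aFun k n s - aFun n k s * aFun k n t)) with hgdef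
    -- the pointwise sum vanishes
    have hsum0 : ∀ t ∈ Set.Icc (0:ℝ) (2*Real.pi), ∑' k, g k t = 0 := by
      intro t ht
      have hXm : MeasurableSet (Set.Ico (0:ℝ) t) := measurableSet_Ico
      have hXs : Set.Ico (0:ℝ) t ⊆ Set.Ico 0 (2*Real.pi) := Set.Ico_subset_Ico le_rfl ht.2
      have hA := expand _ _ hXm hYm hXs hYs n
      have hB := expand _ _ hYm hXm hYs hXs n
      have hEq : (E (Set.Ico (0:ℝ) t)) ((E (Set.Ico (0:ℝ) s)) (e n))
          = (E (Set.Ico (0:ℝ) s)) ((E (Set.Ico (0:ℝ) t)) (e n)) := by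
        have hcc := hcomm _ _ hXm hYm hXs hYs
        have h3 := DFunLike.congr_fun hcc (e n)
        simpa using h3
      have hA' := hA.mul_right (Complex.exp (Complex.I * (p:ℂ) * (t:ℂ)))
      have hB' := hB.mul_right (Complex.exp (Complex.I * (p:ℂ) * (t:ℂ)))
      have hsub := hA'.sub hB'
      have hfun : (fun k =>
            (c n k * phaseInt (Set.Ico (0:ℝ) t) n k) * (c k n * phaseInt (Set.Ico (0:ℝ) s) k n)
              * Complex.exp (Complex.I * (p:ℂ) * (t:ℂ))
          - (c n k * phaseInt (Set.Ico (0:ℝ) s) n k) * (c k n * phaseInt (Set.Ico (0:ℝ) t) k n)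
              * Complex.exp (Complex.I * (p:ℂ) * (t:ℂ)))
          = fun k => g k t := by
        funext k
        simp only [hgdef]
        rw [phaseInt_Ico n k t ht.1, phaseInt_Ico k n t ht.1, hbY k n, hbY n k]
        ring
      rw [hfun] at hsub
      rw [hsub.tsum_eq, hEq]
      exact sub_self _
    -- continuity / integrability
    have hexpc : Continuous (fun t : ℝ => Complex.exp (Complex.I * (p:ℂ) * (t:ℂ))) := by
      fun_prop
    have hgcont : ∀ k, Continuous (g k) := by
      intro k
      simp only [hgdef]
      exact continuous_const.mul (hexpc.mul
        (((aFun_continuous n k).mul continuous_const).sub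
          (continuous_const.mul (aFun_continuous k n))))
    have hgint : ∀ k, IntegrableOn (g k) (Set.Ico (0:ℝ) (2*Real.pi)) := by
      intro k
      exact (((hgcont k).continuousOn).integrableOn_compact isCompact_Icc).mono_set
        Set.Ico_subset_Icc_self
    -- pointwise norm bound
    have hgnorm : ∀ k, k ≠ n → ∀ t : ℝ, ‖g k t‖ ≤ 2 / (Real.pi * |(n:ℝ)-k|)^2 := by
      intro k hk t
      have hnk : n ≠ k := fun h => hk h.symm
      have hb1 := norm_aFun_le n k hnk t
      have hb2 := norm_aFun_le k n hk s
      have hb3 := norm_aFun_le n k hnk s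
      have hb4 := norm_aFun_le k n hk t
      rw [abs_sub_comm ((k:ℝ)) ((n:ℝ))] at hb2 hb4
      have hD : 0 < Real.pi * |(n:ℝ)-k| := by
        apply mul_pos hπ
        rw [abs_pos, sub_ne_zero]
        exact_mod_cast hnk
      have h4 : ‖aFun n k t * aFun k n s - aFun n k s * aFun k n t‖
          ≤ 1/(Real.pi * |(n:ℝ)-k|) * (1/(Real.pi * |(n:ℝ)-k|))
            + 1/(Real.pi * |(n:ℝ)-k|) * (1/(Real.pi * |(n:ℝ)-k|)) := by
        calc ‖aFun n k t * aFun k n s - aFun n k s * aFun k n t‖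
            ≤ ‖aFun n k t * aFun k n s‖ + ‖aFun n k s * aFun k n t‖ := norm_sub_le _ _
          _ = ‖aFun n k t‖ * ‖aFun k n s‖ + ‖aFun n k s‖ * ‖aFun k n t‖ := by
              rw [norm_mul, norm_mul]
          _ ≤ _ := add_le_add (mul_le_mul hb1 hb2 (norm_nonneg _) (by positivity))
              (mul_le_mul hb3 hb4 (norm_nonneg _) (by positivity))
      have hcn : ‖c n k * c k n‖ ≤ 1 := by
        rw [norm_mul]
        calc ‖c n k‖ * ‖c k n‖ ≤ 1 * 1 :=
              mul_le_mul (hcbound n k) (hcbound k n) (norm_nonneg _) zero_le_one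
          _ = 1 := one_mul 1
      calc ‖g k t‖ = ‖c n k * c k n‖ * (‖Complex.exp (Complex.I * (p:ℂ) * (t:ℂ))‖
            * ‖aFun n k t * aFun k n s - aFun n k s * aFun k n t‖) := by
            simp only [hgdef, norm_mul]
        _ = ‖c n k * c k n‖ * ‖aFun n k t * aFun k n s - aFun n k s * aFun k n t‖ := by
            rw [norm_exp_I_nat, one_mul]
        _ ≤ 1 * (1/(Real.pi * |(n:ℝ)-k|) * (1/(Real.pi * |(n:ℝ)-k|))
            + 1/(Real.pi * |(n:ℝ)-k|) * (1/(Real.pi * |(n:ℝ)-k|))) := by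
            apply mul_le_mul hcn h4 (norm_nonneg _) zero_le_one
        _ = 2 / (Real.pi * |(n:ℝ)-k|)^2 := by
            rw [one_mul]
            field_simp
            ring
    -- integral norm bound
    have hintnorm : ∀ k, (∫ t in Set.Ico (0:ℝ) (2*Real.pi), ‖g k t‖)
        ≤ (if k = n then (0:ℝ) else (4*Real.pi) / ((n:ℝ)-k)^2) := by
      intro k
      by_cases hk : k = n
      · subst hk
        rw [if_pos rfl]
        have hz : ∀ t : ℝ, g k t = 0 := fun t => by simp only [hgdef]; ring
        have h0 : (∫ t in Set.Ico (0:ℝ) (2*Real.pi), ‖g k t‖) = 0 := by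
          simp [hz]
        exact le_of_eq h0
      · rw [if_neg hk]
        have hnk : (n:ℝ) ≠ (k:ℝ) := by exact_mod_cast Ne.symm hk
        have hD : 0 < Real.pi * |(n:ℝ)-k| := by
          apply mul_pos hπ
          rw [abs_pos, sub_ne_zero]
          exact hnk
        have hd2 : (0:ℝ) < ((n:ℝ)-k)^2 := by
          have : (n:ℝ) - k ≠ 0 := sub_ne_zero.mpr hnk
          positivity
        calc (∫ t in Set.Ico (0:ℝ) (2*Real.pi), ‖g k t‖)
            ≤ ∫ _t in Set.Ico (0:ℝ) (2*Real.pi), 2/(Real.pi * |(n:ℝ)-k|)^2 := by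
              apply setIntegral_mono_on ((hgint k).norm) _ measurableSet_Ico
                (fun t _ => hgnorm k hk t)
              exact (integrableOn_const_iff).mpr
                (Or.inr (by rw [Real.volume_Ico]; exact ENNReal.ofReal_lt_top))
          _ = (volume (Set.Ico (0:ℝ) (2*Real.pi))).toReal * (2/(Real.pi * |(n:ℝ)-k|)^2) := by
              rw [setIntegral_const, smul_eq_mul, measureReal_def]
          _ ≤ (4*Real.pi) / ((n:ℝ)-k)^2 := by
              rw [Real.volume_Ico, sub_zero, ENNReal.toReal_ofReal (by positivity)]
              have hsq : (Real.pi * |(n:ℝ)-k|)^2 = Real.pi^2 * ((n:ℝ)-k)^2 := by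
                rw [mul_pow, _root_.sq_abs]
              rw [hsq]
              have hLHS : 2*Real.pi * (2/(Real.pi^2 * ((n:ℝ)-k)^2))
                  = 4/(Real.pi * ((n:ℝ)-k)^2) := by
                field_simp
                ring
              rw [hLHS, div_le_div_iff₀ (by positivity) hd2]
              have h9 : (9:ℝ) ≤ Real.pi * Real.pi := by nlinarith [Real.pi_gt_three]
              nlinarith [mul_le_mul_of_nonneg_right h9 hd2.le]
    -- summability of the integrals of norms
    have hsummable : Summable (fun k => ∫ t in Set.Ico (0:ℝ) (2*Real.pi), ‖g k t‖) :=
      Summable.of_nonneg_of_le (fun k => integral_nonneg (fun t => norm_nonneg _))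
        hintnorm (bound_summable n)
    -- exchange sum and integral
    have hexch : ∑' k, (∫ t in Set.Ico (0:ℝ) (2*Real.pi), g k t) = 0 := by
      rw [integral_tsum_of_summable_integral_norm (fun k => hgint k) hsummable]
      have h0 : ∫ t in Set.Ico (0:ℝ) (2*Real.pi), (∑' k, g k t)
          = ∫ _t in Set.Ico (0:ℝ) (2*Real.pi), (0:ℂ) := by
        apply setIntegral_congr_fun measurableSet_Ico
        intro t ht
        exact hsum0 t ⟨ht.1, le_of_lt ht.2⟩
      rw [h0, integral_zero]
    -- value of each integral
    have hI : ∀ k, (∫ t in Set.Ico (0:ℝ) (2*Real.pi), g k t)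
        = (c n k * c k n) *
          ((if (k:ℤ) = (n:ℤ) + p then Complex.I/(p:ℂ)
              else if k = n then -(Complex.I/(p:ℂ)) else 0) * aFun k n s
            - aFun n k s * (if (n:ℤ) = (k:ℤ) + p then Complex.I/(p:ℂ)
              else if n = k then -(Complex.I/(p:ℂ)) else 0)) := by
      intro k
      have hi1 : IntegrableOn (fun t : ℝ =>
          (Complex.exp (Complex.I * (p:ℂ) * (t:ℂ)) * aFun n k t) * aFun k n s)
          (Set.Ico (0:ℝ) (2*Real.pi)) :=
        (((hexpc.mul (aFun_continuous n k)).mul continuous_const).continuousOn.integrableOn_compact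
          isCompact_Icc).mono_set Set.Ico_subset_Icc_self
      have hi2 : IntegrableOn (fun t : ℝ =>
          aFun n k s * (Complex.exp (Complex.I * (p:ℂ) * (t:ℂ)) * aFun k n t))
          (Set.Ico (0:ℝ) (2*Real.pi)) :=
        ((continuous_const.mul (hexpc.mul (aFun_continuous k n))).continuousOn.integrableOn_compact
          isCompact_Icc).mono_set Set.Ico_subset_Icc_self
      have e1 : (fun t : ℝ => g k t) = fun t : ℝ => (c n k * c k n) *
          ((Complex.exp (Complex.I * (p:ℂ) * (t:ℂ)) * aFun n k t) * aFun k n s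
            - aFun n k s * (Complex.exp (Complex.I * (p:ℂ) * (t:ℂ)) * aFun k n t)) := by
        funext t
        simp only [hgdef]
        ring
      rw [e1, integral_const_mul, integral_sub hi1 hi2, integral_mul_const,
        integral_const_mul, intA p hp n k, intA p hp k n]
    -- finish by cases
    by_cases hpn : p ≤ n
    · rw [if_pos hpn]
      have hzero : ∀ k ∉ ({n+p, n-p} : Finset ℕ),
          (∫ t in Set.Ico (0:ℝ) (2*Real.pi), g k t) = 0 := by
        intro k hkmem
        simp only [Finset.mem_insert, Finset.mem_singleton] at hkmem
        push_neg at hkmem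
        obtain ⟨hk1, hk2⟩ := hkmem
        rw [hI k]
        by_cases hkn : k = n
        · rw [hkn]
          ring
        · rw [if_neg (show ¬((k:ℤ) = (n:ℤ) + p) from by omega), if_neg hkn,
            if_neg (show ¬((n:ℤ) = (k:ℤ) + p) from by omega),
            if_neg (fun h => hkn h.symm)]
          ring
      have hts := tsum_eq_sum (L := SummationFilter.unconditional ℕ) hzero
      rw [hts, Finset.sum_pair (show n+p ≠ n-p from by omega), hI (n+p), hI (n-p)] at hexch
      rw [if_pos (show (((n+p:ℕ)):ℤ) = (n:ℤ) + p from by push_cast; ring),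
        if_neg (show ¬((n:ℤ) = (((n+p:ℕ)):ℤ) + p) from by omega),
        if_neg (show ¬(n = n+p) from by omega),
        if_neg (show ¬((((n-p:ℕ)):ℤ) = (n:ℤ) + p) from by omega),
        if_neg (show ¬(n-p = n) from by omega),
        if_pos (show (n:ℤ) = (((n-p:ℕ)):ℤ) + p from by omega),
        aFun_shift p n hp hpn s] at hexch
      have hα : (Complex.I/(p:ℂ)) * aFun (n+p) n s ≠ 0 := by
        apply mul_ne_zero (div_ne_zero Complex.I_ne_zero hpC)
        rw [hs]
        exact aFun_p_ne p n hp
      have hfactor : ((Complex.I/(p:ℂ)) * aFun (n+p) n s)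
          * ((c n (n+p) * c (n+p) n) - (c n (n-p) * c (n-p) n)) = 0 := by
        linear_combination hexch
      have hdiff := sub_eq_zero.mp ((mul_eq_zero.mp hfactor).resolve_left hα)
      rw [Nat.sub_add_cancel hpn]
      rw [hdiff]
      ring
    · rw [if_neg hpn]
      have hzero : ∀ k ∉ ({n+p} : Finset ℕ),
          (∫ t in Set.Ico (0:ℝ) (2*Real.pi), g k t) = 0 := by
        intro k hkmem
        simp only [Finset.mem_singleton] at hkmem
        rw [hI k]
        by_cases hkn : k = n
        · rw [hkn]
          ring
        · rw [if_neg (show ¬((k:ℤ) = (n:ℤ) + p) from by omega), if_neg hkn,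
            if_neg (show ¬((n:ℤ) = (k:ℤ) + p) from by omega),
            if_neg (fun h => hkn h.symm)]
          ring
      rw [tsum_eq_sum hzero, Finset.sum_singleton, hI (n+p),
        if_pos (show (((n+p:ℕ)):ℤ) = (n:ℤ) + p from by push_cast; ring),
        if_neg (show ¬((n:ℤ) = (((n+p:ℕ)):ℤ) + p) from by omega),
        if_neg (show ¬(n = n+p) from by omega)] at hexch
      have hα : (Complex.I/(p:ℂ)) * aFun (n+p) n s ≠ 0 := by
        apply mul_ne_zero (div_ne_zero Complex.I_ne_zero hpC)
        rw [hs]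
        exact aFun_p_ne p n hp
      have hfactor : ((Complex.I/(p:ℂ)) * aFun (n+p) n s) * (c n (n+p) * c (n+p) n) = 0 := by
        linear_combination hexch
      exact (mul_eq_zero.mp hfactor).resolve_left hα
  -- strong induction to kill the weights
  have hwzero : ∀ n : ℕ, c n (n+p) * c (n+p) n = 0 := by
    intro n
    induction n using Nat.strong_induction_on with
    | _ n ih =>
      rw [hw n]
      split_ifs with h
      · exact ih (n-p) (by omega)
      · rfl
  have hz := hwzero n0
  rw [hconj n0 (n0+p), Complex.mul_conj] at hz
  exact_mod_cast Complex.normSq_eq_zero.mp (by exact_mod_cast hz)
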